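/- Let F be a finite field with |F| = q and let α₁,...,α_k be pairwise distinct elements of F. The number of matrices A ∈ Mₙ(F) all of whose eigenvalues (in any extension, i.e., all roots of the characteristic polynomial counted in F̄) lie in {α₁,...,α_k} AND which are diagonalizable equals the sum over all tuples (n₁,...,n_k) of nonnegative integers with n₁+...+n_k = n of |GLₙ(F)| / (|GL_{n₁}(F)|·...·|GL_{n_k}(F)|), where |GL₀(F)| := 1. -/

import Mathlib

open Matrix MulAction

namespace Stmt2Aux

/-- Units of a pi monoid. -/
def piUnits {κ : Type*} {M : κ → Type*} [∀ i, Monoid (M i)] :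
    (∀ i, M i)ˣ ≃* ∀ i, (M i)ˣ where
  toFun u i := ⟨u.val i, u.inv i, congrFun u.val_inv i, congrFun u.inv_val i⟩
  invFun u := ⟨fun i => (u i : M i), fun i => ((u i)⁻¹ : (M i)ˣ),
    funext fun i => (u i).val_inv, funext fun i => (u i).inv_val⟩
  left_inv u := Units.ext rfl
  right_inv u := funext fun i => Units.ext rfl
  map_mul' u v := rfl

variable {F : Type} [Field F] [Fintype F] [DecidableEq F]
variable {ι : Type} [Fintype ι] [DecidableEq ι] {k : ℕ}

/-- block diagonal embedding adapted to the fibers of `d`. -/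
def blkHom (d : ι → Fin k) :
    (∀ i : Fin k, Matrix {j : ι // d j = i} {j : ι // d j = i} F) →* Matrix ι ι F :=
  ((Matrix.reindexAlgEquiv F F (Equiv.sigmaFiberEquiv d)).toAlgHom.toRingHom.toMonoidHom).comp
    (Matrix.blockDiagonal'RingHom (fun i => {j : ι // d j = i}) F).toMonoidHom

lemma cast_fib {d : ι → Fin k} {i i' : Fin k} (h : i' = i)
    (p : {j : ι // d j = i'} = {j : ι // d j = i}) (x : {j : ι // d j = i'}) :
    cast p x = ⟨x.1, h ▸ x.2⟩ := by subst h; rfl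

lemma blkHom_apply (d : ι → Fin k)
    (B : ∀ i : Fin k, Matrix {j : ι // d j = i} {j : ι // d j = i} F) (j j' : ι) :
    blkHom d B j j' = if h : d j = d j' then B (d j) ⟨j, rfl⟩ ⟨j', h.symm⟩ else 0 := by
  have h0 : blkHom d B j j' =
      Matrix.blockDiagonal' B ((Equiv.sigmaFiberEquiv d).symm j)
        ((Equiv.sigmaFiberEquiv d).symm j') := rfl
  rw [h0]
  have h1 : (Equiv.sigmaFiberEquiv d).symm j = ⟨d j, ⟨j, rfl⟩⟩ := rfl
  have h2 : (Equiv.sigmaFiberEquiv d).symm j' = ⟨d j', ⟨j', rfl⟩⟩ := rfl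
  rw [h1, h2, Matrix.blockDiagonal'_apply']
  by_cases h : d j = d j'
  · rw [dif_pos h, dif_pos h]
    congr 1
    exact cast_fib h.symm _ _
  · rw [dif_neg h, dif_neg h]

lemma blkHom_diag (α : Fin k → F) (d : ι → Fin k) :
    blkHom d (fun i => Matrix.diagonal (fun _ => α i)) = Matrix.diagonal fun j => α (d j) := by
  ext j j'
  rw [blkHom_apply]
  by_cases h : d j = d j'
  · rw [dif_pos h]
    by_cases hjj : j = j'
    · subst hjj; simp
    · rw [Matrix.diagonal_apply_ne _ hjj, Matrix.diagonal_apply_ne]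
      simpa [Subtype.ext_iff] using hjj
  · rw [dif_neg h, Matrix.diagonal_apply_ne]
    exact fun hjj => h (by rw [hjj])

lemma blkHom_comm (α : Fin k → F) (d : ι → Fin k)
    (B : ∀ i : Fin k, Matrix {j : ι // d j = i} {j : ι // d j = i} F) :
    blkHom d B * Matrix.diagonal (fun j => α (d j)) =
      Matrix.diagonal (fun j => α (d j)) * blkHom d B := by
  rw [← blkHom_diag α d, ← _root_.map_mul, ← _root_.map_mul]
  congr 1
  funext i
  show B i * Matrix.diagonal (fun _ => α i) = Matrix.diagonal (fun _ => α i) * B i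
  rw [← Matrix.smul_one_eq_diagonal, mul_smul_comm, smul_mul_assoc, mul_one, one_mul]

lemma blkHom_injective (d : ι → Fin k) : Function.Injective (blkHom (F := F) d) := by
  intro B C h
  have h' : Matrix.reindexAlgEquiv F F (Equiv.sigmaFiberEquiv d) (Matrix.blockDiagonal' B) =
      Matrix.reindexAlgEquiv F F (Equiv.sigmaFiberEquiv d) (Matrix.blockDiagonal' C) := h
  exact Matrix.blockDiagonal'_injective ((Matrix.reindexAlgEquiv F F _).injective h')

lemma blkHom_of_offdiag_zero (d : ι → Fin k) {M : Matrix ι ι F}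
    (hM : ∀ j j', d j ≠ d j' → M j j' = 0) :
    blkHom d (fun i => M.submatrix (fun a : {j : ι // d j = i} => a.1) (fun a : {j : ι // d j = i} => a.1)) = M := by
  ext j j'
  rw [blkHom_apply]
  by_cases h : d j = d j'
  · rw [dif_pos h]; rfl
  · rw [dif_neg h]; exact (hM j j' h).symm


theorem card_stabilizer_eq (α : Fin k → F) (hα : Function.Injective α) (d : ι → Fin k) :
    Nat.card (stabilizer (ConjAct (Matrix ι ι F)ˣ) (Matrix.diagonal fun j => α (d j))) =
      ∏ i : Fin k, Nat.card (Matrix {j : ι // d j = i} {j : ι // d j = i} F)ˣ := by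
  set D : Matrix ι ι F := Matrix.diagonal fun j => α (d j) with hDdef
  have key : ∀ u : (∀ i, Matrix {j : ι // d j = i} {j : ι // d j = i} F)ˣ,
      ConjAct.toConjAct (Units.map (blkHom d) u) ∈
        stabilizer (ConjAct (Matrix ι ι F)ˣ) D := by
    intro u
    rw [MulAction.mem_stabilizer_iff, ConjAct.units_smul_def, ConjAct.ofConjAct_toConjAct]
    have hc : ((Units.map (blkHom d) u : (Matrix ι ι F)ˣ) : Matrix ι ι F) * D
        = D * ((Units.map (blkHom d) u : (Matrix ι ι F)ˣ) : Matrix ι ι F) := by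
      simpa using blkHom_comm α d u.val
    rw [hc, mul_assoc, Units.mul_inv, mul_one]
  have hbij : Function.Bijective (fun u : ∀ i, (Matrix {j : ι // d j = i} {j : ι // d j = i} F)ˣ =>
      (⟨ConjAct.toConjAct (Units.map (blkHom d) (piUnits.symm u)), key _⟩ :
        stabilizer (ConjAct (Matrix ι ι F)ˣ) D)) := by
    constructor
    · intro u v huv
      have h1 : Units.map (blkHom d) (piUnits.symm u) = Units.map (blkHom d) (piUnits.symm v) :=
        ConjAct.toConjAct.injective (congrArg Subtype.val huv)
      have h2 : blkHom d (piUnits.symm u).val = blkHom d (piUnits.symm v).val :=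
        congrArg Units.val h1
      have h3 := blkHom_injective (F := F) d h2
      have h4 : piUnits.symm u = piUnits.symm v := Units.ext h3
      exact piUnits.symm.injective h4
    · rintro ⟨g, hg⟩
      set P : (Matrix ι ι F)ˣ := ConjAct.ofConjAct g with hPdef
      rw [MulAction.mem_stabilizer_iff, ConjAct.units_smul_def, ← hPdef] at hg
      have hPD : (P : Matrix ι ι F) * D = D * (P : Matrix ι ι F) := by
        have h5 := congrArg (fun X => X * (P : Matrix ι ι F)) hg
        simpa only [mul_assoc, Units.inv_mul, mul_one] using h5
      have hPD' : (↑P⁻¹ : Matrix ι ι F) * D = D * (↑P⁻¹ : Matrix ι ι F) := by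
        have h5 := congrArg (fun X => (↑P⁻¹ : Matrix ι ι F) * X) hg
        simpa only [← mul_assoc, Units.inv_mul, one_mul] using h5.symm
      have hoff : ∀ (M : Matrix ι ι F), M * D = D * M →
          ∀ j j', d j ≠ d j' → M j j' = 0 := by
        intro M hM j j' hne
        have h6 : (M * D) j j' = (D * M) j j' := by rw [hM]
        rw [hDdef, Matrix.mul_diagonal, Matrix.diagonal_mul] at h6
        have h7 : M j j' * (α (d j') - α (d j)) = 0 := by
          rw [mul_sub, h6]; ring
        rcases mul_eq_zero.mp h7 with h8 | h8
        · exact h8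
        · exact absurd (hα (sub_eq_zero.mp h8)) (Ne.symm hne)
      have hBval : blkHom d (fun i =>
          (↑P : Matrix ι ι F).submatrix (fun a : {j : ι // d j = i} => a.1) (fun a : {j : ι // d j = i} => a.1))
          = ↑P := blkHom_of_offdiag_zero d (hoff _ hPD)
      have hBinv : blkHom d (fun i =>
          (↑P⁻¹ : Matrix ι ι F).submatrix (fun a : {j : ι // d j = i} => a.1) (fun a : {j : ι // d j = i} => a.1))
          = ↑P⁻¹ := blkHom_of_offdiag_zero d (hoff _ hPD')
      have hmul1 : (fun i =>
          (↑P : Matrix ι ι F).submatrix (fun a : {j : ι // d j = i} => a.1) (fun a : {j : ι // d j = i} => a.1)) *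
          (fun i =>
          (↑P⁻¹ : Matrix ι ι F).submatrix (fun a : {j : ι // d j = i} => a.1) (fun a : {j : ι // d j = i} => a.1))
          = 1 := by
        apply blkHom_injective (F := F) d
        rw [_root_.map_mul, _root_.map_one, hBval, hBinv, Units.mul_inv]
      have hmul2 : (fun i =>
          (↑P⁻¹ : Matrix ι ι F).submatrix (fun a : {j : ι // d j = i} => a.1) (fun a : {j : ι // d j = i} => a.1)) *
          (fun i =>
          (↑P : Matrix ι ι F).submatrix (fun a : {j : ι // d j = i} => a.1) (fun a : {j : ι // d j = i} => a.1))
          = 1 := by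
        apply blkHom_injective (F := F) d
        rw [_root_.map_mul, _root_.map_one, hBval, hBinv, Units.inv_mul]
      refine ⟨piUnits ⟨_, _, hmul1, hmul2⟩, ?_⟩
      apply Subtype.ext
      show ConjAct.toConjAct (Units.map (blkHom d) (piUnits.symm (piUnits _))) = g
      rw [MulEquiv.symm_apply_apply]
      have h9 : Units.map (blkHom d) ⟨_, _, hmul1, hmul2⟩ = P := Units.ext (by simpa using hBval)
      rw [h9, hPdef, ConjAct.toConjAct_ofConjAct]
  calc Nat.card (stabilizer (ConjAct (Matrix ι ι F)ˣ) D)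
      = Nat.card (∀ i, (Matrix {j : ι // d j = i} {j : ι // d j = i} F)ˣ) :=
        (Nat.card_congr (Equiv.ofBijective _ hbij)).symm
    _ = ∏ i : Fin k, Nat.card (Matrix {j : ι // d j = i} {j : ι // d j = i} F)ˣ := Nat.card_pi

theorem card_orbit_mul (α : Fin k → F) (hα : Function.Injective α) (d : ι → Fin k) :
    Nat.card (orbit (ConjAct (Matrix ι ι F)ˣ) (Matrix.diagonal fun j => α (d j))) *
      ∏ i : Fin k, Nat.card (Matrix {j : ι // d j = i} {j : ι // d j = i} F)ˣ =
    Nat.card (Matrix ι ι F)ˣ := by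
  classical
  rw [← card_stabilizer_eq α hα d]
  letI : Fintype (ConjAct (Matrix ι ι F)ˣ) := Fintype.ofEquiv _ ConjAct.toConjAct.toEquiv
  letI : Fintype (orbit (ConjAct (Matrix ι ι F)ˣ) (Matrix.diagonal fun j => α (d j))) :=
    Fintype.ofFinite _
  letI : Fintype (stabilizer (ConjAct (Matrix ι ι F)ˣ) (Matrix.diagonal fun j => α (d j))) :=
    Fintype.ofFinite _
  rw [Nat.card_eq_fintype_card, Nat.card_eq_fintype_card, Nat.card_eq_fintype_card]
  rw [MulAction.card_orbit_mul_card_stabilizer_eq_card_group (ConjAct (Matrix ι ι F)ˣ)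
    (Matrix.diagonal fun j => α (d j))]
  exact Fintype.card_congr ConjAct.ofConjAct.toEquiv

theorem card_fiber_of_mem_orbit (α : Fin k → F) (hα : Function.Injective α) (d : ι → Fin k)
    {A : Matrix ι ι F}
    (hA : A ∈ orbit (ConjAct (Matrix ι ι F)ˣ) (Matrix.diagonal fun j => α (d j))) (i : Fin k) :
    Fintype.card ι - (A - α i • (1 : Matrix ι ι F)).rank = Fintype.card {j : ι // d j = i} := by
  obtain ⟨g, rfl⟩ := hA
  set D : Matrix ι ι F := Matrix.diagonal fun j => α (d j) with hDdef
  have h1 : g • D - α i • (1 : Matrix ι ι F) =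
      ((ConjAct.ofConjAct g : (Matrix ι ι F)ˣ) : Matrix ι ι F) * (D - α i • (1 : Matrix ι ι F)) *
        ((ConjAct.ofConjAct g)⁻¹ : (Matrix ι ι F)ˣ) := by
    simp only [ConjAct.units_smul_def, mul_sub, sub_mul, mul_smul_comm, smul_mul_assoc,
      mul_one, Units.mul_inv]
  rw [h1]
  rw [Matrix.rank_mul_eq_left_of_isUnit_det _ _
    ((Matrix.isUnit_iff_isUnit_det _).mp ((ConjAct.ofConjAct g)⁻¹).isUnit)]
  rw [Matrix.rank_mul_eq_right_of_isUnit_det _ _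
    ((Matrix.isUnit_iff_isUnit_det _).mp (ConjAct.ofConjAct g).isUnit)]
  rw [hDdef, Matrix.smul_one_eq_diagonal, Matrix.diagonal_sub, Matrix.rank_diagonal]
  have he : ∀ j : ι, (α (d j) - α i ≠ 0) ↔ ¬ d j = i := by
    intro j
    rw [sub_ne_zero]
    exact ⟨fun h hji => h (by rw [hji]), fun h hc => h (hα hc)⟩
  rw [Fintype.card_congr (Equiv.subtypeEquivRight he), Fintype.card_subtype_compl]
  exact Nat.sub_sub_self (Fintype.card_subtype_le _)

theorem diag_comp_mem_orbit (v : ι → F) (σ : ι ≃ ι) :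
    Matrix.diagonal (fun j => v (σ j)) ∈
      orbit (ConjAct (Matrix ι ι F)ˣ) (Matrix.diagonal v) := by
  have hval : (1 : Matrix ι ι F).submatrix ⇑σ ⇑(Equiv.refl ι) *
      (1 : Matrix ι ι F).submatrix ⇑(Equiv.refl ι) ⇑σ = 1 := by
    rw [Matrix.submatrix_mul_equiv, one_mul, Matrix.submatrix_one_equiv]
  have hinv : (1 : Matrix ι ι F).submatrix ⇑(Equiv.refl ι) ⇑σ *
      (1 : Matrix ι ι F).submatrix ⇑σ ⇑(Equiv.refl ι) = 1 := by
    rw [Matrix.submatrix_mul_equiv, one_mul]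
    simp
  refine ⟨ConjAct.toConjAct (⟨(1 : Matrix ι ι F).submatrix ⇑σ ⇑(Equiv.refl ι),
      (1 : Matrix ι ι F).submatrix ⇑(Equiv.refl ι) ⇑σ, hval, hinv⟩ : (Matrix ι ι F)ˣ), ?_⟩
  simp only [ConjAct.units_smul_def, ConjAct.ofConjAct_toConjAct]
  show (1 : Matrix ι ι F).submatrix ⇑σ ⇑(Equiv.refl ι) * Matrix.diagonal v *
      (1 : Matrix ι ι F).submatrix ⇑(Equiv.refl ι) ⇑σ = _
  rw [Matrix.one_submatrix_mul, Matrix.mul_submatrix_one, Matrix.submatrix_submatrix]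
  simp only [Equiv.refl_symm, Equiv.coe_refl, Function.comp_id, Function.id_comp]
  rw [Matrix.submatrix_diagonal_equiv]
  rfl

theorem exists_perm (d d' : ι → Fin k)
    (h : ∀ i, Fintype.card {j : ι // d j = i} = Fintype.card {j : ι // d' j = i}) :
    ∃ σ : ι ≃ ι, ∀ j, d' (σ j) = d j := by
  refine ⟨((Equiv.sigmaFiberEquiv d).symm.trans
    (Equiv.sigmaCongrRight fun i => Fintype.equivOfCardEq (h i))).trans
      (Equiv.sigmaFiberEquiv d'), fun j => ?_⟩
  exact (Fintype.equivOfCardEq (h (d j)) ⟨j, rfl⟩).2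

end Stmt2Aux


/-- The number of `n × n` matrices over a finite field that are diagonalizable
with all eigenvalues among the pairwise distinct `α₁, …, α_k` equals
`∑_{n₁+⋯+n_k = n, nᵢ ≥ 0} |GLₙ(F)| / ∏ᵢ |GL_{nᵢ}(F)|`. -/
theorem stmt_2 (F : Type) [Field F] [Fintype F] [DecidableEq F] (n k : ℕ) (hn : 1 ≤ n)
    (α : Fin k → F) (hα : Function.Injective α) :
    Nat.card {A : Matrix (Fin n) (Fin n) F //
        ∃ (d : Fin n → Fin k) (P : (Matrix (Fin n) (Fin n) F)ˣ),
          A = (P : Matrix (Fin n) (Fin n) F) * Matrix.diagonal (fun j => α (d j)) *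
              ((P⁻¹ : _) : Matrix (Fin n) (Fin n) F)} =
      ∑ m ∈ Finset.Nat.antidiagonalTuple k n,
        Nat.card (Matrix (Fin n) (Fin n) F)ˣ /
          ∏ i : Fin k, Nat.card (Matrix (Fin (m i)) (Fin (m i)) F)ˣ := by
  classical
  set T := Finset.Nat.antidiagonalTuple k n with hT
  have hsum : ∀ mt : {m : Fin k → ℕ // m ∈ T}, ∑ i, mt.1 i = n :=
    fun mt => Finset.Nat.mem_antidiagonalTuple.mp mt.2
  let em : ∀ mt : {m : Fin k → ℕ // m ∈ T}, (Σ i : Fin k, Fin (mt.1 i)) ≃ Fin n := fun mt =>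
    Fintype.equivOfCardEq (by simpa using hsum mt)
  let dm : {m : Fin k → ℕ // m ∈ T} → Fin n → Fin k := fun mt j => ((em mt).symm j).1
  let DT : {m : Fin k → ℕ // m ∈ T} → Matrix (Fin n) (Fin n) F := fun mt =>
    Matrix.diagonal fun j => α (dm mt j)
  have hfib : ∀ mt i, Fintype.card {j : Fin n // dm mt j = i} = mt.1 i := by
    intro mt i
    have e1 : {j : Fin n // dm mt j = i} ≃ {p : Σ i' : Fin k, Fin (mt.1 i') // p.1 = i} :=
      (Equiv.subtypeEquiv (em mt).symm (fun j => Iff.rfl))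
    have e2 : {p : Σ i' : Fin k, Fin (mt.1 i') // p.1 = i} ≃ Fin (mt.1 i) :=
      { toFun := fun x => Fin.cast (congrArg mt.1 x.2) x.1.2
        invFun := fun b => ⟨⟨i, b⟩, rfl⟩
        left_inv := by rintro ⟨⟨i', b⟩, rfl⟩; rfl
        right_inv := fun b => rfl }
    rw [Fintype.card_congr (e1.trans e2), Fintype.card_fin]
  let μ : Matrix (Fin n) (Fin n) F → (Fin k → ℕ) := fun A i => n - (A - α i • 1).rank
  have hμ : ∀ (dd : Fin n → Fin k) (A : Matrix (Fin n) (Fin n) F),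
      A ∈ MulAction.orbit (ConjAct (Matrix (Fin n) (Fin n) F)ˣ)
        (Matrix.diagonal fun j => α (dd j)) →
      ∀ i, μ A i = Fintype.card {j : Fin n // dd j = i} := by
    intro dd A hA i
    have h := Stmt2Aux.card_fiber_of_mem_orbit α hα dd hA i
    simpa using h
  have main3 : ∀ (mt : {m : Fin k → ℕ // m ∈ T}) (A : Matrix (Fin n) (Fin n) F),
      A ∈ MulAction.orbit (ConjAct (Matrix (Fin n) (Fin n) F)ˣ) (DT mt) →
      ∃ (d : Fin n → Fin k) (P : (Matrix (Fin n) (Fin n) F)ˣ),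
        A = (P : Matrix (Fin n) (Fin n) F) * Matrix.diagonal (fun j => α (d j)) *
          ((P⁻¹ : (Matrix (Fin n) (Fin n) F)ˣ) : Matrix (Fin n) (Fin n) F) := by
    rintro mt A ⟨g, rfl⟩
    refine ⟨dm mt, ConjAct.ofConjAct g, ?_⟩
    show g • DT mt = _
    rw [ConjAct.units_smul_def]
  have main2 : ∀ (mt : {m : Fin k → ℕ // m ∈ T}) (A : Matrix (Fin n) (Fin n) F),
      A ∈ MulAction.orbit (ConjAct (Matrix (Fin n) (Fin n) F)ˣ) (DT mt) → μ A = mt.1 := by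
    intro mt A hA
    funext i
    rw [hμ (dm mt) A hA i, hfib]
  have main1 : ∀ A : Matrix (Fin n) (Fin n) F,
      (∃ (d : Fin n → Fin k) (P : (Matrix (Fin n) (Fin n) F)ˣ),
        A = (P : Matrix (Fin n) (Fin n) F) * Matrix.diagonal (fun j => α (d j)) *
          ((P⁻¹ : (Matrix (Fin n) (Fin n) F)ˣ) : Matrix (Fin n) (Fin n) F)) →
      ∃ (hTm : μ A ∈ T),
        A ∈ MulAction.orbit (ConjAct (Matrix (Fin n) (Fin n) F)ˣ) (DT ⟨μ A, hTm⟩) := by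
    rintro A ⟨dd, P, rfl⟩
    set B : Matrix (Fin n) (Fin n) F :=
      (P : Matrix (Fin n) (Fin n) F) * Matrix.diagonal (fun j => α (dd j)) *
        ((P⁻¹ : (Matrix (Fin n) (Fin n) F)ˣ) : Matrix (Fin n) (Fin n) F) with hB
    have hAorb : B ∈ MulAction.orbit (ConjAct (Matrix (Fin n) (Fin n) F)ˣ)
        (Matrix.diagonal fun j => α (dd j)) :=
      ⟨ConjAct.toConjAct P, by
        show ConjAct.toConjAct P • Matrix.diagonal (fun j => α (dd j)) = B
        rw [ConjAct.units_smul_def, ConjAct.ofConjAct_toConjAct, hB]⟩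
    have hμA := hμ dd _ hAorb
    have hsum2 : ∑ i, μ B i = n := by
      rw [Finset.sum_congr rfl fun i _ => hμA i]
      calc ∑ i : Fin k, Fintype.card {j : Fin n // dd j = i}
          = Fintype.card (Σ i : Fin k, {j : Fin n // dd j = i}) := (Fintype.card_sigma).symm
        _ = Fintype.card (Fin n) := Fintype.card_congr (Equiv.sigmaFiberEquiv dd)
        _ = n := Fintype.card_fin n
    have hTm : μ B ∈ T := Finset.Nat.mem_antidiagonalTuple.mpr hsum2
    refine ⟨hTm, ?_⟩
    obtain ⟨σ, hσ⟩ := Stmt2Aux.exists_perm dd (dm ⟨μ B, hTm⟩)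
      (fun i => (hμA i).symm.trans (hfib ⟨μ B, hTm⟩ i).symm)
    have hDdd : Matrix.diagonal (fun j => α (dd j)) =
        Matrix.diagonal (fun j => α (dm ⟨μ B, hTm⟩ (σ j))) :=
      congrArg Matrix.diagonal (funext fun j => by rw [hσ j])
    have horb2 : Matrix.diagonal (fun j => α (dd j)) ∈
        MulAction.orbit (ConjAct (Matrix (Fin n) (Fin n) F)ˣ) (DT ⟨μ B, hTm⟩) := by
      rw [hDdd]
      exact Stmt2Aux.diag_comp_mem_orbit (fun j' => α (dm ⟨μ B, hTm⟩ j')) σ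
    obtain ⟨g2, hg2⟩ := horb2
    obtain ⟨g1, hg1⟩ := hAorb
    refine ⟨g1 * g2, ?_⟩
    have hg2' : g2 • DT ⟨μ B, hTm⟩ = Matrix.diagonal (fun j => α (dd j)) := hg2
    have hg1' : g1 • Matrix.diagonal (fun j => α (dd j)) = B := hg1
    show (g1 * g2) • DT ⟨μ B, hTm⟩ = B
    rw [mul_smul, hg2', hg1']
  let eqv : {A : Matrix (Fin n) (Fin n) F //
      ∃ (d : Fin n → Fin k) (P : (Matrix (Fin n) (Fin n) F)ˣ),
        A = (P : Matrix (Fin n) (Fin n) F) * Matrix.diagonal (fun j => α (d j)) *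
            ((P⁻¹ : _) : Matrix (Fin n) (Fin n) F)} ≃
      Σ mt : {m : Fin k → ℕ // m ∈ T},
        MulAction.orbit (ConjAct (Matrix (Fin n) (Fin n) F)ˣ) (DT mt) :=
    { toFun := fun A => ⟨⟨μ A.1, (main1 A.1 A.2).choose⟩, ⟨A.1, (main1 A.1 A.2).choose_spec⟩⟩
      invFun := fun x => ⟨x.2.1, main3 x.1 x.2.1 x.2.2⟩
      left_inv := fun A => Subtype.ext rfl
      right_inv := fun x => by
        obtain ⟨mt, A, hA⟩ := x
        have h1 : (⟨μ A, (main1 A (main3 mt A hA)).choose⟩ : {m : Fin k → ℕ // m ∈ T}) = mt :=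
          Subtype.ext (main2 mt A hA)
        refine Sigma.ext h1 ?_
        refine (Subtype.heq_iff_coe_eq ?_).mpr rfl
        intro x
        exact iff_of_eq (congrArg (fun mt' => x ∈ MulAction.orbit
          (ConjAct (Matrix (Fin n) (Fin n) F)ˣ) (DT mt')) h1) }
  rw [Nat.card_congr eqv]
  letI : ∀ mt : {m : Fin k → ℕ // m ∈ T},
      Fintype (MulAction.orbit (ConjAct (Matrix (Fin n) (Fin n) F)ˣ) (DT mt)) :=
    fun mt => Fintype.ofFinite _
  rw [Nat.card_eq_fintype_card, Fintype.card_sigma]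
  rw [← Finset.sum_coe_sort T (fun m => Nat.card (Matrix (Fin n) (Fin n) F)ˣ /
      ∏ i : Fin k, Nat.card (Matrix (Fin (m i)) (Fin (m i)) F)ˣ)]
  refine Finset.sum_congr rfl fun mt _ => ?_
  have hcards : ∀ i : Fin k,
      Nat.card (Matrix {j : Fin n // dm mt j = i} {j : Fin n // dm mt j = i} F)ˣ
      = Nat.card (Matrix (Fin (mt.1 i)) (Fin (mt.1 i)) F)ˣ := fun i =>
    Nat.card_congr (Units.mapEquiv
      ((Matrix.reindexAlgEquiv F F
        (Fintype.equivOfCardEq (by rw [hfib mt i, Fintype.card_fin]))).toRingEquiv.toMulEquiv)).toEquiv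
  have hmulkey := Stmt2Aux.card_orbit_mul α hα (dm mt)
  rw [Finset.prod_congr rfl (fun i _ => hcards i)] at hmulkey
  have hpos : 0 < ∏ i : Fin k, Nat.card (Matrix (Fin (mt.1 i)) (Fin (mt.1 i)) F)ˣ :=
    Finset.prod_pos fun i _ => Nat.card_pos
  rw [← Nat.card_eq_fintype_card]
  exact (Nat.div_eq_of_eq_mul_left hpos hmulkey.symm).symm
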